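/- Let p and q be distinct primes and let V be a nontrivial simple module over the group algebra 𝔽_p[ℤ/q] (equivalently, a nonzero 𝔽_p-vector space with an action of the cyclic group ℤ/q having no nonzero fixed vectors and no proper nonzero invariant subspaces). Then φ(V ⋊ ℤ/q) = 0, where the semidirect product is formed with respect to this action. -/

import Mathlib

/-- `φ(G)`: the number of elements of `G` whose order equals the exponent of `G`. -/
noncomputable def phi (G : Type*) [Group G] : ℕ :=
  Nat.card {g : G // orderOf g = Monoid.exponent G}

/-- Package an action by additive automorphisms as an action by multiplicative
automorphisms of `Multiplicative V`, as needed to form a semidirect product. -/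
def MonoidHom.toMulAutMultiplicative {H : Type*} [Monoid H] {V : Type*} [AddGroup V]
    (ρ : H →* Multiplicative (AddAut V)) : H →* MulAut (Multiplicative V) where
  toFun g := AddEquiv.toMultiplicative (Multiplicative.toAdd (ρ g))
  map_one' := by ext v; simp
  map_mul' g h := by ext v; simp

section AuxLemmas

instance instCoeFunMultiplicativeAddAut {V : Type*} [AddGroup V] :
    CoeFun (Multiplicative (AddAut V)) (fun _ => V → V) :=
  ⟨fun f => ⇑(Multiplicative.toAdd f : AddAut V)⟩

lemma aux_pow_card_eq_one {q : ℕ} (g : Multiplicative (ZMod q)) : g ^ q = 1 := by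
  apply Multiplicative.toAdd.injective
  show q • g.toAdd = 0
  rw [nsmul_eq_mul]; simp [ZMod.natCast_self]

variable {p q : ℕ} {V : Type*} [AddCommGroup V] [Module (ZMod p) V]
  {ρ : Multiplicative (ZMod q) →* Multiplicative (AddAut V)}

/-- If a nonidentity `g` fixes `v`, then `v = 0`. -/
lemma aux_fix_eq_zero (hp : p.Prime) (hq : q.Prime)
    (hnontrivial : ∃ (g : Multiplicative (ZMod q)) (v : V), ρ g v ≠ v)
    (hsimple : ∀ W : Submodule (ZMod p) V,
      (∀ (g : Multiplicative (ZMod q)), ∀ v ∈ W, ρ g v ∈ W) → W = ⊥ ∨ W = ⊤)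
    {g : Multiplicative (ZMod q)} (hg : g ≠ 1) {v : V} (hv : ρ g v = v) : v = 0 := by
  haveI : NeZero p := ⟨hp.ne_zero⟩
  haveI : NeZero q := ⟨hq.ne_zero⟩
  set W : Submodule (ZMod p) V :=
    { carrier := {w | ρ g w = w}
      add_mem' := fun {a b} ha hb => by
        simp only [Set.mem_setOf_eq] at *
        rw [map_add, ha, hb]
      zero_mem' := by simp
      smul_mem' := fun c w hw => by
        simp only [Set.mem_setOf_eq] at hw ⊢
        have hcw : c • w = c.val • w := by
          rw [← Nat.cast_smul_eq_nsmul (ZMod p), ZMod.natCast_val, ZMod.cast_id]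
        rw [hcw, map_nsmul, hw] } with hWdef
  have hWmem : ∀ w : V, w ∈ W ↔ ρ g w = w := fun w => Iff.rfl
  have hWinv : ∀ (h : Multiplicative (ZMod q)), ∀ w ∈ W, ρ h w ∈ W := by
    intro h w hw
    rw [hWmem] at hw ⊢
    calc ρ g (ρ h w) = (ρ g * ρ h : Multiplicative (AddAut V)) w := rfl
      _ = ρ (g * h) w := by rw [map_mul ρ]
      _ = ρ (h * g) w := by rw [mul_comm]
      _ = (ρ h * ρ g : Multiplicative (AddAut V)) w := by rw [map_mul ρ]
      _ = ρ h (ρ g w) := rfl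
      _ = ρ h w := by rw [hw]
  rcases hsimple W hWinv with hbot | htop
  · have : v ∈ W := by rw [hWmem]; exact hv
    rw [hbot, Submodule.mem_bot] at this
    exact this
  · exfalso
    -- `ρ g` is the identity, and `g` generates, so `ρ` is trivial
    have hρg : ρ g = 1 := by
      apply Multiplicative.toAdd.injective
      ext w
      have : w ∈ W := htop ▸ Submodule.mem_top
      rw [hWmem] at this
      simpa using this
    have horder : orderOf g = q := by
      have hdvd : orderOf g ∣ q := orderOf_dvd_of_pow_eq_one (aux_pow_card_eq_one g)
      rcases (Nat.Prime.eq_one_or_self_of_dvd hq _ hdvd) with h1 | h1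
      · exact absurd (orderOf_eq_one_iff.mp h1) hg
      · exact h1
    have hzpow : Subgroup.zpowers g = ⊤ := by
      apply Subgroup.eq_top_of_card_eq
      rw [Nat.card_zpowers, horder, Nat.card_eq_fintype_card, Fintype.card_multiplicative,
        ZMod.card]
    obtain ⟨g0, v0, hgv⟩ := hnontrivial
    have hg0 : g0 ∈ Subgroup.zpowers g := hzpow ▸ Subgroup.mem_top g0
    obtain ⟨k, hk⟩ := hg0
    apply hgv
    rw [← hk, map_zpow, hρg, one_zpow]
    rfl

/-- Every element of the semidirect product has order dividing `p` or `q`. -/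
lemma aux_orderOf_dvd (hp : p.Prime) (hq : q.Prime)
    (hnontrivial : ∃ (g : Multiplicative (ZMod q)) (v : V), ρ g v ≠ v)
    (hsimple : ∀ W : Submodule (ZMod p) V,
      (∀ (g : Multiplicative (ZMod q)), ∀ v ∈ W, ρ g v ∈ W) → W = ⊥ ∨ W = ⊤)
    (x : Multiplicative V ⋊[ρ.toMulAutMultiplicative] Multiplicative (ZMod q)) :
    orderOf x ∣ p ∨ orderOf x ∣ q := by
  set g := x.right with hgdef
  set v := x.left.toAdd with hvdef
  have hright : ∀ n : ℕ, (x ^ n).right = g ^ n := by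
    intro n
    show SemidirectProduct.rightHom (x ^ n) = _
    rw [map_pow]; rfl
  by_cases hg : g = 1
  · -- x lies in the normal subgroup V, so has order dividing p
    left
    apply orderOf_dvd_of_pow_eq_one
    have hx : x = SemidirectProduct.inl x.left := by
      ext
      · rfl
      · rw [← hgdef, hg]; rfl
    rw [hx, ← map_pow]
    have hleft : x.left ^ p = 1 := by
      apply Multiplicative.toAdd.injective
      show p • x.left.toAdd = 0
      rw [← Nat.cast_smul_eq_nsmul (ZMod p), ZMod.natCast_self, zero_smul]
    rw [hleft, map_one]
  · -- x has order dividing q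
    right
    apply orderOf_dvd_of_pow_eq_one
    have hmulleft : ∀ y z : Multiplicative V ⋊[ρ.toMulAutMultiplicative] Multiplicative (ZMod q),
        (y * z).left.toAdd = y.left.toAdd + ρ y.right z.left.toAdd := fun _ _ => rfl
    have key : ∀ n : ℕ, ((x ^ n).left).toAdd = ∑ i ∈ Finset.range n, ((ρ g) ^ i) v := by
      intro n
      induction n with
      | zero => simp
      | succ n ih =>
        rw [pow_succ', hmulleft, ih, Finset.sum_range_succ' (fun i => ((ρ g) ^ i) v) n,
          map_sum, add_comm]
        congr 1
        apply Finset.sum_congr rfl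
        intro i _
        rw [pow_succ']
        rfl
    have hpowq : (ρ g) ^ q = 1 := by
      rw [← map_pow, aux_pow_card_eq_one, map_one]
    have hfix : ρ g ((x ^ q).left.toAdd) = (x ^ q).left.toAdd := by
      rw [key]
      rw [map_sum]
      have h1 : ∀ i ∈ Finset.range q, ρ g (((ρ g) ^ i) v) = ((ρ g) ^ (i + 1)) v := by
        intro i _
        rw [pow_succ']
        rfl
      rw [Finset.sum_congr rfl h1]
      have h2 : (∑ i ∈ Finset.range q, ((ρ g) ^ (i + 1)) v) + ((ρ g) ^ (0:ℕ)) v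
          = (∑ i ∈ Finset.range q, ((ρ g) ^ i) v) + ((ρ g) ^ q) v :=
        (Finset.sum_range_succ' (fun i => ((ρ g) ^ i) v) q).symm.trans
          (Finset.sum_range_succ (fun i => ((ρ g) ^ i) v) q)
      have h3 : ((ρ g : Multiplicative (AddAut V)) ^ (0:ℕ)) v = ((ρ g) ^ q) v := by rw [hpowq]; rfl
      rw [h3] at h2
      exact add_right_cancel h2
    have hzero : (x ^ q).left.toAdd = 0 :=
      aux_fix_eq_zero hp hq hnontrivial hsimple hg hfix
    ext
    · show (x ^ q).left.toAdd = (1 : Multiplicative V).toAdd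
      rw [hzero]; rfl
    · show (x ^ q).right = (1 : _)
      rw [hright, aux_pow_card_eq_one]

end AuxLemmas

/-- **Lemma.** Let `p ≠ q` be primes and let `V` be a nontrivial simple
`𝔽_p[ℤ/q]`-module, i.e. a nonzero `𝔽_p`-vector space with an action `ρ` of `ℤ/q`
which is nontrivial and admits no proper nonzero invariant subspace. Then
`φ(V ⋊ ℤ/q) = 0`. -/
theorem phi_semidirectProduct_eq_zero
    (p q : ℕ) (hp : p.Prime) (hq : q.Prime) (hpq : p ≠ q)
    (V : Type*) [AddCommGroup V] [Module (ZMod p) V] [Finite V] [Nontrivial V]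
    (ρ : Multiplicative (ZMod q) →* Multiplicative (AddAut V))
    (hnontrivial : ∃ (g : Multiplicative (ZMod q)) (v : V), Multiplicative.toAdd (ρ g) v ≠ v)
    (hsimple : ∀ W : Submodule (ZMod p) V,
      (∀ (g : Multiplicative (ZMod q)), ∀ v ∈ W, Multiplicative.toAdd (ρ g) v ∈ W) → W = ⊥ ∨ W = ⊤) :
    phi (Multiplicative V ⋊[ρ.toMulAutMultiplicative] Multiplicative (ZMod q)) = 0 := by
  haveI : NeZero q := ⟨hq.ne_zero⟩
  set G := Multiplicative V ⋊[ρ.toMulAutMultiplicative] Multiplicative (ZMod q) with hGdef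
  have hdvd := aux_orderOf_dvd hp hq hnontrivial hsimple
  -- the exponent is p * q
  have hexp : Monoid.exponent G = p * q := by
    apply Nat.dvd_antisymm
    · apply Monoid.exponent_dvd_of_forall_pow_eq_one
      intro x
      apply orderOf_dvd_iff_pow_eq_one.mp
      rcases hdvd x with h | h
      · exact h.trans (Dvd.intro q rfl)
      · exact h.trans (Dvd.intro_left p rfl)
    · have hcop : Nat.Coprime p q := (Nat.coprime_primes hp hq).mpr hpq
      apply Nat.Coprime.mul_dvd_of_dvd_of_dvd hcop
      · -- an element of order p
        obtain ⟨v0, hv0⟩ := exists_ne (0 : V)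
        have ho : orderOf (SemidirectProduct.inl (φ := ρ.toMulAutMultiplicative)
            (Multiplicative.ofAdd v0)) = p := by
          rw [orderOf_injective _ SemidirectProduct.inl_injective]
          have h1 : orderOf (Multiplicative.ofAdd v0) = addOrderOf v0 := rfl
          rw [h1]
          have hdv : addOrderOf v0 ∣ p := by
            apply addOrderOf_dvd_of_nsmul_eq_zero
            rw [← Nat.cast_smul_eq_nsmul (ZMod p), ZMod.natCast_self, zero_smul]
          rcases (Nat.Prime.eq_one_or_self_of_dvd hp _ hdv) with h2 | h2
          · exact absurd (AddMonoid.addOrderOf_eq_one_iff.mp h2) hv0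
          · exact h2
        have := Monoid.order_dvd_exponent (G := G) (SemidirectProduct.inl (φ := ρ.toMulAutMultiplicative)
            (Multiplicative.ofAdd v0))
        rwa [ho] at this
      · -- an element of order q
        have ho : orderOf (SemidirectProduct.inr (φ := ρ.toMulAutMultiplicative)
            (Multiplicative.ofAdd (1 : ZMod q))) = q := by
          rw [orderOf_injective _ SemidirectProduct.inr_injective]
          have h1 : orderOf (Multiplicative.ofAdd (1 : ZMod q)) = addOrderOf (1 : ZMod q) := rfl
          rw [h1, ZMod.addOrderOf_one]
        have := Monoid.order_dvd_exponent (G := G) (SemidirectProduct.inr (φ := ρ.toMulAutMultiplicative)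
            (Multiplicative.ofAdd (1 : ZMod q)))
        rwa [ho] at this
  -- no element has order p * q
  have hempty : IsEmpty {x : G // orderOf x = Monoid.exponent G} := by
    constructor
    rintro ⟨x, hx⟩
    rw [hexp] at hx
    rcases hdvd x with h | h
    · rw [hx] at h
      have hle : p * q ≤ p := Nat.le_of_dvd hp.pos h
      have hlt : p < p * q := (Nat.lt_mul_iff_one_lt_right hp.pos).mpr hq.one_lt
      omega
    · rw [hx] at h
      have hle : p * q ≤ q := Nat.le_of_dvd hq.pos h
      have hlt : q < p * q := (Nat.lt_mul_iff_one_lt_left hq.pos).mpr hp.one_lt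
      omega
  rw [phi]
  exact Nat.card_of_isEmpty
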